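/- arXiv:1801.04717 — 3 statements merged into one kernel-verified Lean document; each statement's English description precedes it below -/
import Mathlib

section
/- Let a > 1 and b > 1 be integers with b even. Then the equation (a^n - 1)(b^{2n} a^n - 1) = x^2 has no solutions in positive integers n, x. -/
/-- All nonnegative solutions of the Pell equation `x² - (g²s²+g) y² = 1` have `y` even,
when `g, s ≥ 1`.  (The fundamental solution is `(2gs²+1, 2s)`.) -/
lemma pell_y_even (g s : ℤ) (hg : 1 ≤ g) (hs : 1 ≤ s) :
    ∀ y : ℕ, ∀ x : ℤ, x ^ 2 = (g ^ 2 * s ^ 2 + g) * (y : ℤ) ^ 2 + 1 → Even y := by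
  intro y
  induction y using Nat.strong_induction_on with
  | _ y ih =>
    intro x hx
    rcases Nat.eq_zero_or_pos y with h0 | hpos
    · simp [h0]
    have hy1 : (1 : ℤ) ≤ (y : ℤ) := by exact_mod_cast hpos
    obtain ⟨X, hXdef⟩ : ∃ t : ℤ, t = |x| := ⟨_, rfl⟩
    have hX0 : 0 ≤ X := hXdef ▸ abs_nonneg x
    have hX2 : X ^ 2 = (g ^ 2 * s ^ 2 + g) * (y : ℤ) ^ 2 + 1 := by
      rw [hXdef, sq_abs]; exact hx
    have hgy : (0 : ℤ) < g * (y : ℤ) ^ 2 :=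
      mul_pos (by linarith) (pow_pos (by linarith) 2)
    by_cases hlt : (y : ℤ) < 2 * s
    · exfalso
      have h7 : (0 : ℤ) < g * (y : ℤ) * (2 * s - (y : ℤ)) :=
        mul_pos (mul_pos (by linarith) (by linarith)) (by linarith)
      have h1 : (g * s * (y : ℤ)) ^ 2 < X ^ 2 := by nlinarith [hX2, hgy]
      have h2 : X ^ 2 < (g * s * (y : ℤ) + 1) ^ 2 := by nlinarith [hX2, h7]
      have hgs : (0 : ℤ) ≤ g * s * (y : ℤ) :=
        le_of_lt (mul_pos (mul_pos (by linarith) (by linarith)) (by linarith))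
      have h3 : g * s * (y : ℤ) < X := lt_of_pow_lt_pow_left₀ 2 hX0 h1
      have h4 : X < g * s * (y : ℤ) + 1 := lt_of_pow_lt_pow_left₀ 2 (by linarith) h2
      omega
    · push_neg at hlt
      -- descent using fundamental solution (2gs²+1, 2s)
      have hfund : (2 * g * s ^ 2 + 1) ^ 2 = (g ^ 2 * s ^ 2 + g) * (2 * s) ^ 2 + 1 := by ring
      have hx₁pos : (0 : ℤ) < 2 * g * s ^ 2 + 1 := by nlinarith [sq_nonneg s]
      have hid1 : ((y : ℤ) * (2 * g * s ^ 2 + 1)) ^ 2 - (X * (2 * s)) ^ 2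
          = (y : ℤ) ^ 2 - (2 * s) ^ 2 := by linear_combination (-(4 : ℤ) * s ^ 2) * hX2
      have hy2s : (2 * s) ^ 2 ≤ (y : ℤ) ^ 2 := by nlinarith [hlt, hs, hy1]
      have hsq : (X * (2 * s)) ^ 2 ≤ ((y : ℤ) * (2 * g * s ^ 2 + 1)) ^ 2 := by linarith
      have hyx₁ : (0 : ℤ) ≤ (y : ℤ) * (2 * g * s ^ 2 + 1) :=
        mul_nonneg (by linarith) (by linarith)
      have hXy₁ : (0 : ℤ) ≤ X * (2 * s) := mul_nonneg hX0 (by linarith)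
      have hle : X * (2 * s) ≤ (y : ℤ) * (2 * g * s ^ 2 + 1) :=
        le_of_pow_le_pow_left₀ two_ne_zero hyx₁ hsq
      have hid2 : (X * (2 * s)) ^ 2 - ((y : ℤ) * (2 * g * s ^ 2)) ^ 2
          = 4 * s ^ 2 * (g * (y : ℤ) ^ 2 + 1) := by linear_combination (4 : ℤ) * s ^ 2 * hX2
      have hlt2 : ((y : ℤ) * (2 * g * s ^ 2)) ^ 2 < (X * (2 * s)) ^ 2 := by nlinarith [hgy]
      have h5 : (y : ℤ) * (2 * g * s ^ 2) < X * (2 * s) :=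
        lt_of_pow_lt_pow_left₀ 2 hXy₁ hlt2
      -- the new smaller solution
      obtain ⟨y', hy'⟩ : ∃ t : ℤ, t = (y : ℤ) * (2 * g * s ^ 2 + 1) - X * (2 * s) := ⟨_, rfl⟩
      obtain ⟨x', hx'⟩ : ∃ t : ℤ, t =
          X * (2 * g * s ^ 2 + 1) - (g ^ 2 * s ^ 2 + g) * (y : ℤ) * (2 * s) := ⟨_, rfl⟩
      have hy'0 : 0 ≤ y' := by rw [hy']; linarith
      have hy'lt : y' < (y : ℤ) := by rw [hy']; linarith
      have hx'2 : x' ^ 2 = (g ^ 2 * s ^ 2 + g) * y' ^ 2 + 1 := by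
        rw [hx', hy']; linear_combination
          ((2 * g * s ^ 2 + 1) ^ 2 - (g ^ 2 * s ^ 2 + g) * (2 * s) ^ 2) * hX2
          + (X ^ 2 - (g ^ 2 * s ^ 2 + g) * (y : ℤ) ^ 2) * hfund
      have hy₂cast : ((y'.toNat : ℤ)) = y' := Int.toNat_of_nonneg hy'0
      have hy₂lt : y'.toNat < y := by
        have : ((y'.toNat : ℤ)) < (y : ℤ) := by rw [hy₂cast]; exact hy'lt
        exact_mod_cast this
      have hev₂ : Even y'.toNat := ih y'.toNat hy₂lt x' (by rw [hy₂cast]; exact hx'2)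
      have hevy' : Even y' := by rw [← hy₂cast]; exact_mod_cast hev₂
      have : Even ((y : ℤ)) := by
        rcases hevy' with ⟨k, hk⟩
        rw [hy'] at hk
        exact ⟨k + s * X - g * s ^ 2 * (y : ℤ), by linarith⟩
      exact_mod_cast this


private lemma aux_pos (G u c : ℤ) (hG : 1 ≤ G) (hc : 1 ≤ c) (h : G * u = c) : 1 ≤ u := by
  nlinarith

private lemma aux_sq (m A : ℤ) (hm : 2 ≤ m) (hA : 2 ≤ A) : 1 ≤ m ^ 2 * A - 1 := by
  nlinarith

private lemma aux_m3 (m : ℤ) (hm : 2 ≤ m) : 3 ≤ m ^ 2 - 1 := by nlinarith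

private lemma aux_abs1 (s u : ℤ) (h0 : 0 ≤ s) (hu : 1 ≤ u) (h2 : u = s ^ 2) : 1 ≤ s := by
  nlinarith

set_option maxHeartbeats 1000000 in
theorem stmt_12 (a b : ℕ) (ha : 1 < a) (hb : 1 < b) (hbe : Even b) :
    ¬ ∃ (n x : ℕ), 0 < n ∧ 0 < x ∧ (a ^ n - 1) * (b ^ (2 * n) * a ^ n - 1) = x ^ 2 := by
  rintro ⟨n, x, hn, hx, heq⟩
  have ha1 : 1 ≤ a ^ n := Nat.one_le_pow _ _ (by omega)
  have hb1 : 1 ≤ b ^ (2 * n) * a ^ n :=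
    Nat.mul_le_mul (Nat.one_le_pow _ _ (by omega)) ha1
  zify [ha1, hb1] at heq
  obtain ⟨A, hA⟩ : ∃ t : ℤ, t = (a : ℤ) ^ n := ⟨_, rfl⟩
  obtain ⟨m, hm⟩ : ∃ t : ℤ, t = (b : ℤ) ^ n := ⟨_, rfl⟩
  have hbm : ((b : ℤ)) ^ (2 * n) = m ^ 2 := by rw [hm, ← pow_mul, Nat.mul_comm]
  rw [hbm, ← hA] at heq
  -- heq : (A - 1) * (m ^ 2 * A - 1) = x ^ 2
  have hA2 : 2 ≤ A := by
    rw [hA]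
    calc (2 : ℤ) ≤ (a : ℤ) := by exact_mod_cast ha
    _ = (a : ℤ) ^ 1 := (pow_one _).symm
    _ ≤ (a : ℤ) ^ n := pow_le_pow_right₀ (by exact_mod_cast ha.le.trans' (by norm_num)) hn
  have hm2 : 2 ≤ m := by
    rw [hm]
    calc (2 : ℤ) ≤ (b : ℤ) := by exact_mod_cast hb
    _ = (b : ℤ) ^ 1 := (pow_one _).symm
    _ ≤ (b : ℤ) ^ n := pow_le_pow_right₀ (by exact_mod_cast hb.le.trans' (by norm_num)) hn
  have hmeven : Even m := by
    rw [hm]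
    exact Int.even_pow.mpr ⟨by exact_mod_cast hbe, by omega⟩
  have hu1 : 1 ≤ A - 1 := by linarith
  have hv1 : 1 ≤ m ^ 2 * A - 1 := aux_sq m A hm2 hA2
  -- extract the gcd
  obtain ⟨G, hGdef⟩ : ∃ t : ℤ, t = ((Int.gcd (A - 1) (m ^ 2 * A - 1) : ℕ) : ℤ) := ⟨_, rfl⟩
  have hgpos : 0 < Int.gcd (A - 1) (m ^ 2 * A - 1) :=
    Int.gcd_pos_of_ne_zero_left _ (by linarith)
  have hG1 : 1 ≤ G := by rw [hGdef]; exact_mod_cast hgpos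
  obtain ⟨u₁, hu₁def⟩ : ∃ t : ℤ, t = (A - 1) / G := ⟨_, rfl⟩
  obtain ⟨v₁, hv₁def⟩ : ∃ t : ℤ, t = (m ^ 2 * A - 1) / G := ⟨_, rfl⟩
  have huG : G * u₁ = A - 1 := by
    rw [hu₁def, hGdef]; exact Int.mul_ediv_cancel' (Int.gcd_dvd_left _ _)
  have hvG : G * v₁ = m ^ 2 * A - 1 := by
    rw [hv₁def, hGdef]; exact Int.mul_ediv_cancel' (Int.gcd_dvd_right _ _)
  have hcop : IsCoprime u₁ v₁ := by
    rw [Int.isCoprime_iff_gcd_eq_one, hu₁def, hv₁def, hGdef]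
    exact Int.gcd_div_gcd_div_gcd hgpos
  have hu₁pos : 0 < u₁ := by linarith [aux_pos G u₁ (A - 1) hG1 hu1 huG]
  have hv₁pos : 0 < v₁ := by linarith [aux_pos G v₁ (m ^ 2 * A - 1) hG1 hv1 hvG]
  have hGx : G ^ 2 ∣ (x : ℤ) ^ 2 := ⟨u₁ * v₁, by rw [← heq, ← huG, ← hvG]; ring⟩
  obtain ⟨z, hz⟩ := (Int.pow_dvd_pow_iff two_ne_zero).mp hGx
  have huvz : u₁ * v₁ = z ^ 2 := by
    have hG0 : G ^ 2 ≠ 0 := by positivity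
    refine mul_left_cancel₀ hG0 ?_
    rw [show G ^ 2 * (u₁ * v₁) = (G * u₁) * (G * v₁) by ring, huG, hvG, heq, hz]; ring
  obtain ⟨s₀, hs₀⟩ := Int.sq_of_isCoprime hcop huvz
  obtain ⟨p₀, hp₀⟩ := Int.sq_of_isCoprime hcop.symm (by rw [mul_comm]; exact huvz)
  have hus : u₁ = s₀ ^ 2 := by
    rcases hs₀ with h | h
    · exact h
    · exfalso; rw [h] at hu₁pos; linarith [sq_nonneg s₀]
  have hvp : v₁ = p₀ ^ 2 := by
    rcases hp₀ with h | h
    · exact h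
    · exfalso; rw [h] at hv₁pos; linarith [sq_nonneg p₀]
  obtain ⟨s, hsdef⟩ : ∃ t : ℤ, t = |s₀| := ⟨_, rfl⟩
  obtain ⟨p, hpdef⟩ : ∃ t : ℤ, t = |p₀| := ⟨_, rfl⟩
  have hs2 : u₁ = s ^ 2 := by rw [hsdef, sq_abs]; exact hus
  have hp2 : v₁ = p ^ 2 := by rw [hpdef, sq_abs]; exact hvp
  have hs0 : 0 ≤ s := hsdef ▸ abs_nonneg _
  have hp0 : 0 ≤ p := hpdef ▸ abs_nonneg _
  have hs1 : 1 ≤ s := aux_abs1 s u₁ hs0 (by linarith) hs2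
  have hp1 : 1 ≤ p := aux_abs1 p v₁ hp0 (by linarith) hp2
  have e1 : G * p ^ 2 = m ^ 2 * A - 1 := by rw [← hp2]; exact hvG
  have e2 : G * s ^ 2 = A - 1 := by rw [← hs2]; exact huG
  -- key identity : G * (p² - m²s²) = m² - 1
  have hgh : G * (p ^ 2 - m ^ 2 * s ^ 2) = m ^ 2 - 1 := by
    linear_combination e1 - m ^ 2 * e2
  have hhpos : 1 ≤ p ^ 2 - m ^ 2 * s ^ 2 :=
    aux_pos G _ (m ^ 2 - 1) hG1 (by linarith [aux_m3 m hm2]) hgh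
  have hpms : m * s < p := by
    refine lt_of_pow_lt_pow_left₀ 2 hp0 ?_
    have hring : (m * s) ^ 2 = m ^ 2 * s ^ 2 := by ring
    linarith [hhpos, hring]
  -- parity facts
  have hvodd : Odd (m ^ 2 * A - 1) :=
    ((Int.even_pow.mpr ⟨hmeven, two_ne_zero⟩).mul_right A).sub_odd odd_one
  have hpodd : Odd p := by
    have h1 : Odd (G * p ^ 2) := by rw [e1]; exact hvodd
    rcases Int.odd_pow.mp (Int.odd_mul.mp h1).2 with h | h
    · exact h
    · omega
  obtain ⟨δ, hδ⟩ : ∃ t : ℤ, t = p - m * s := ⟨_, rfl⟩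
  have hδ1 : 1 ≤ δ := by
    have : 0 < δ := by rw [hδ]; linarith
    omega
  have hδodd : Odd δ := by rw [hδ]; exact hpodd.sub_even (hmeven.mul_right s)
  have hkey : G * δ * (δ + 2 * m * s) = m ^ 2 - 1 := by
    rw [hδ]; linear_combination hgh
  -- the Pell relation
  obtain ⟨r, hr⟩ : ∃ t : ℤ, t = m - s * G * δ := ⟨_, rfl⟩
  have hrsq : r ^ 2 = (G ^ 2 * s ^ 2 + G) * δ ^ 2 + 1 := by
    rw [hr]; linear_combination -hkey
  have hevt : Even δ.toNat :=
    pell_y_even G s hG1 hs1 δ.toNat r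
      (by rw [Int.toNat_of_nonneg (by omega : (0:ℤ) ≤ δ)]; exact hrsq)
  have hδeven : Even δ := by
    rw [← Int.toNat_of_nonneg (show (0:ℤ) ≤ δ by omega)]
    exact_mod_cast hevt
  exact (Int.not_odd_iff_even.mpr hδeven) hδodd
end

section
/- For the Lucas sequence V_n(P, -1) defined by V_0 = 2, V_1 = P, V_{n+1} = P·V_n - V_{n-1}: 5 divides V_n(P,-1) if and only if 5 divides P and n is odd. -/
/-- Lucas sequence of the second kind with parameters `(P, -1)`. -/
def lucasV (P : ℤ) : ℕ → ℤ
  | 0 => 2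
  | 1 => P
  | n + 2 => P * lucasV P (n + 1) - lucasV P n

/-- The same sequence computed in `ZMod 5`. -/
def lucasVZ (p : ZMod 5) : ℕ → ZMod 5
  | 0 => 2
  | 1 => p
  | n + 2 => p * lucasVZ p (n + 1) - lucasVZ p n

lemma lucasV_cast (P : ℤ) : ∀ n, ((lucasV P n : ZMod 5)) = lucasVZ (P : ZMod 5) n := by
  have key : ∀ n, ((lucasV P n : ZMod 5)) = lucasVZ (P : ZMod 5) n ∧
      ((lucasV P (n+1) : ZMod 5)) = lucasVZ (P : ZMod 5) (n+1) := by
    intro n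
    induction n with
    | zero => simp [lucasV, lucasVZ]
    | succ k ih =>
      refine ⟨ih.2, ?_⟩
      show ((lucasV P (k+2) : ZMod 5)) = lucasVZ (P : ZMod 5) (k+2)
      simp only [lucasV, lucasVZ, Int.cast_sub, Int.cast_mul, ih.1, ih.2]
  exact fun n => (key n).1

lemma lucasVZ_period (p : ZMod 5) : ∀ n, lucasVZ p (n + 12) = lucasVZ p n := by
  have base : ∀ q : ZMod 5, lucasVZ q 12 = lucasVZ q 0 ∧ lucasVZ q 13 = lucasVZ q 1 := by
    decide
  have key : ∀ n, lucasVZ p (n + 12) = lucasVZ p n ∧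
      lucasVZ p (n + 1 + 12) = lucasVZ p (n + 1) := by
    intro n
    induction n with
    | zero => exact (base p)
    | succ k ih =>
      refine ⟨ih.2, ?_⟩
      show lucasVZ p (k + 14) = lucasVZ p (k + 2)
      have h1 : k + 14 = (k + 12) + 2 := by ring
      rw [h1]
      show p * lucasVZ p (k + 12 + 1) - lucasVZ p (k + 12) =
        p * lucasVZ p (k + 1) - lucasVZ p k
      rw [show k + 12 + 1 = k + 1 + 12 from by ring, ih.2, ih.1]
  exact fun n => (key n).1

lemma lucasVZ_mod12 (p : ZMod 5) (n : ℕ) : lucasVZ p n = lucasVZ p (n % 12) := by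
  conv_lhs => rw [← Nat.div_add_mod n 12]
  generalize n % 12 = r
  generalize n / 12 = q
  induction q with
  | zero => simp
  | succ k ih =>
    have : 12 * (k + 1) + r = (12 * k + r) + 12 := by ring
    rw [this, lucasVZ_period, ih]

lemma lucasVZ_key : ∀ (p : ZMod 5), ∀ m < 12, (lucasVZ p m = 0 ↔ p = 0 ∧ m % 2 = 1) := by
  decide

theorem stmt_13 (P : ℤ) (hP : P ≠ 0) (hdisc : P ^ 2 - 4 > 0) (n : ℕ) :
    (5 : ℤ) ∣ lucasV P n ↔ (5 : ℤ) ∣ P ∧ Odd n := by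
  have h1 : (5 : ℤ) ∣ lucasV P n ↔ ((lucasV P n : ZMod 5)) = 0 :=
    (ZMod.intCast_zmod_eq_zero_iff_dvd _ 5).symm
  have h2 : (5 : ℤ) ∣ P ↔ ((P : ZMod 5)) = 0 :=
    (ZMod.intCast_zmod_eq_zero_iff_dvd _ 5).symm
  rw [h1, h2, lucasV_cast, lucasVZ_mod12]
  have hodd : Odd n ↔ (n % 12) % 2 = 1 := by
    rw [Nat.odd_iff, Nat.mod_mod_of_dvd n (by norm_num : 2 ∣ 12)]
  rw [hodd]
  exact lucasVZ_key (P : ZMod 5) (n % 12) (Nat.mod_lt n (by norm_num))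
end

section
/- Let P be an even nonzero integer with P² - 4 > 0. Then the 2-adic valuation of V_n(P,-1) equals ν₂(P) if n is odd, and equals 1 if n is even, where V_n(P,-1) is the Lucas sequence of the second kind: V_0 = 2, V_1 = P, V_{n+1} = P·V_n - V_{n-1}. -/
lemma lucasV_aux (P m : ℤ) (hm : P = 2 * m) (k : ℕ) :
    (∃ a, lucasV P (2 * k) = 2 + 4 * a) ∧ (∃ b, lucasV P (2 * k + 1) = P * (2 * b + 1)) := by
  induction k with
  | zero => exact ⟨⟨0, rfl⟩, ⟨0, by simp [lucasV]⟩⟩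
  | succ k ih =>
    obtain ⟨⟨a, ha⟩, ⟨b, hb⟩⟩ := ih
    have h2 : 2 * (k + 1) = (2 * k) + 2 := by ring
    have h3 : 2 * (k + 1) + 1 = (2 * k + 1) + 2 := by ring
    constructor
    · refine ⟨m ^ 2 * (2 * b + 1) - a - 1, ?_⟩
      rw [h2, lucasV, ha, hb, hm]; ring
    · refine ⟨2 * (m ^ 2 * (2 * b + 1) - a - 1) - b, ?_⟩
      have : lucasV P (2 * k + 1 + 2) = P * lucasV P (2 * k + 2) - lucasV P (2 * k + 1) := rfl
      rw [h3, this, show (2 * k + 2 : ℕ) = 2 * (k + 1) by ring, h2, lucasV, ha, hb, hm]; ring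

lemma val_two_odd (b : ℤ) : padicValInt 2 (2 * b + 1) = 0 :=
  padicValInt.eq_zero_of_not_dvd (by omega)

theorem stmt_14 (P : ℤ) (hP : P ≠ 0) (hPe : Even P) (hdisc : P ^ 2 - 4 > 0) (n : ℕ) :
    padicValInt 2 (lucasV P n) = if Odd n then padicValInt 2 P else 1 := by
  obtain ⟨m, hm⟩ := hPe
  have hm' : P = 2 * m := by omega
  rcases Nat.even_or_odd n with he | ho
  · obtain ⟨k, hk⟩ := he
    obtain ⟨⟨a, ha⟩, -⟩ := lucasV_aux P m hm' k
    rw [if_neg (by simp [Nat.odd_iff, Nat.even_iff.mp ⟨k, hk⟩]), show n = 2 * k by omega, ha]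
    have : (2 + 4 * a : ℤ) = 2 * (2 * a + 1) := by ring
    rw [this, padicValInt.mul (by norm_num) (by omega), val_two_odd]
    · exact padicValInt.self one_lt_two
  · obtain ⟨k, hk⟩ := ho
    obtain ⟨-, ⟨b, hb⟩⟩ := lucasV_aux P m hm' k
    rw [if_pos ⟨k, hk⟩, show n = 2 * k + 1 by omega, hb,
      padicValInt.mul hP (by omega), val_two_odd]; ring
end
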